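/- arXiv:2005.09434 — 2 statements merged into one kernel-verified Lean document; each statement's English description precedes it below -/
import Mathlib

section
/- Let p be a prime and let n ≥ 1 be an integer with 2n < p - 5. Then the rational number p·(ℋ_{2(p-1)-2n} - ℋ_{p-1-2n}) is a p-adic integer and satisfies p·(ℋ_{2(p-1)-2n} - ℋ_{p-1-2n}) ≡ 1 + p/(2n+1) (mod p^2), where ℋ_m := Σ_{j=1}^m 1/j is the m-th harmonic number. -/
open Finset

noncomputable section

/-- Divided Bernoulli number `ℬ_n = B_n / n`. -/
def Bdiv (n : ℕ) : ℚ := bernoulli n / n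

/-- `padicCongr p m x y` means `x ≡ y (mod p^m)`: the `p`-adic valuation of `x - y`
is at least `m`, expressed via the `p`-adic norm. -/
def padicCongr (p : ℕ) [Fact p.Prime] (m : ℕ) (x y : ℚ) : Prop :=
  ‖((x - y : ℚ) : ℚ_[p])‖ ≤ (p : ℝ) ^ (-(m : ℤ))

open Classical in
/-- The coefficient `(x)_1` of `p` in the Hensel (`p`-adic) expansion of a rational `x`
which is a `p`-adic integer (junk value `0` if `x` is not a `p`-adic integer). -/
def hdigit1 (p : ℕ) [Fact p.Prime] (x : ℚ) : ℕ :=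
  if h : ‖(x : ℚ_[p])‖ ≤ 1 then PadicInt.appr (⟨(x : ℚ_[p]), h⟩ : ℤ_[p]) 2 / p else 0

/-- Unsigned Stirling number of the first kind `[n, k]`: the coefficient of `X^k` in
`X(X+1)⋯(X+n-1)`, i.e. the number of permutations of `n` letters with exactly `k` cycles. -/
def stirlingFirst (n k : ℕ) : ℕ := (ascPochhammer ℕ n).coeff k

/-- Multiple harmonic sum `𝒜★_k = ∑_{1 ≤ i₁ < ⋯ < i_k ≤ p-1} 1/(i₁⋯i_k)`. -/
def mhs (p k : ℕ) : ℚ :=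
  ∑ t ∈ (Finset.Icc 1 (p - 1)).powersetCard k, ∏ i ∈ t, (1 : ℚ) / i

/-- Wilson quotient `w_p = ((p-1)! + 1)/p`. -/
def wilsonQuotient (p : ℕ) : ℚ := ((Nat.factorial (p - 1) : ℚ) + 1) / p

/-- Generalized harmonic number `H_{p-1,k} = ∑_{a=1}^{p-1} 1/a^k`. -/
def Hgen (p k : ℕ) : ℚ := ∑ a ∈ Finset.Icc 1 (p - 1), (1 : ℚ) / (a : ℚ) ^ k

/-- Power sum `S_k = ∑_{a=1}^{p-1} a^k`. -/
def Spow (p k : ℕ) : ℚ := ∑ a ∈ Finset.Icc 1 (p - 1), (a : ℚ) ^ k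

/-- Harmonic number `ℋ_m = ∑_{j=1}^{m} 1/j`. -/
def harmonicQ (m : ℕ) : ℚ := ∑ j ∈ Finset.Icc 1 m, (1 : ℚ) / j

/-- `∑_{a=1}^{p-1} q_a^2 / a^2` where `q_a = (a^{p-1} - 1)/p` is the Fermat quotient. -/
def fermatQuotientSum (p : ℕ) : ℚ :=
  ∑ a ∈ Finset.Icc 1 (p - 1), (((a : ℚ) ^ (p - 1) - 1) / p) ^ 2 / (a : ℚ) ^ 2

section helpers
variable (p : ℕ) [hp : Fact p.Prime]

omit hp in
lemma my_not_dvd {a : ℕ} (h0 : 0 < a) (h1 : a < p) : ¬ p ∣ a :=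
  fun h => absurd (Nat.le_of_dvd h0 h) (by omega)

lemma my_norm_nat_eq_one {a : ℕ} (ha : ¬ p ∣ a) : ‖(a : ℚ_[p])‖ = 1 := by
  have h2 : ¬ ‖((a : ℤ) : ℚ_[p])‖ < 1 := by
    rw [Padic.norm_intCast_lt_one_iff]
    exact_mod_cast ha
  have h1 : ‖((a : ℤ) : ℚ_[p])‖ ≤ 1 := Padic.norm_int_le_one _
  have := le_antisymm h1 (not_lt.mp h2)
  simpa using this

lemma my_core {a b : ℕ} (ha : ¬ p ∣ a) (hb : ¬ p ∣ b) {c : ℤ} (hc : (p : ℤ) ∣ c) :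
    ‖((((c : ℚ) / ((a : ℚ) * (b : ℚ))) : ℚ) : ℚ_[p])‖ ≤ (p : ℝ)⁻¹ := by
  have hc' : ‖((c : ℤ) : ℚ_[p])‖ ≤ (p : ℝ) ^ (-(1 : ℕ) : ℤ) := by
    rw [Padic.norm_int_le_pow_iff_dvd]
    simpa using hc
  rw [zpow_neg] at hc'
  norm_num at hc'
  push_cast
  rw [norm_div, norm_mul, my_norm_nat_eq_one p ha, my_norm_nat_eq_one p hb]
  simpa using hc'

lemma my_sum_norm_le {ι : Type*} (s : Finset ι) (f : ι → ℚ_[p]) {c : ℝ} (hc : 0 ≤ c)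
    (h : ∀ i ∈ s, ‖f i‖ ≤ c) : ‖∑ i ∈ s, f i‖ ≤ c := by
  induction s using Finset.cons_induction with
  | empty => simpa using hc
  | cons a s has ih =>
    rw [Finset.sum_cons]
    exact le_trans (Padic.nonarchimedean _ _)
      (max_le (h a (mem_cons_self _ _)) (ih fun i hi => h i (mem_cons_of_mem hi)))

lemma my_norm_one_div {a : ℕ} (ha : ¬ p ∣ a) : ‖(((1 : ℚ) / a : ℚ) : ℚ_[p])‖ ≤ 1 := by
  push_cast
  rw [norm_div, my_norm_nat_eq_one p ha, norm_one]
  norm_num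

end helpers


theorem statement18 (p n : ℕ) [Fact p.Prime] (hn1 : 1 ≤ n) (hn : 2 * n < p - 5) :
    ‖((((p : ℚ) * (harmonicQ (2 * (p - 1) - 2 * n) - harmonicQ (p - 1 - 2 * n))) : ℚ) : ℚ_[p])‖ ≤ 1 ∧
    padicCongr p 2 ((p : ℚ) * (harmonicQ (2 * (p - 1) - 2 * n) - harmonicQ (p - 1 - 2 * n)))
      (1 + (p : ℚ) / (2 * (n : ℚ) + 1)) := by
  have hp5 : 2 * n + 5 < p := by omega
  have hp0 : 0 < p := by omega
  have hpin0 : (0:ℝ) ≤ (p : ℝ)⁻¹ := by positivity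
  set A : ℚ := ∑ j ∈ Ioc (p-1-2*n) (p-1), (1:ℚ)/j with hA_def
  set B : ℚ := ∑ j ∈ Ioc p (2*(p-1)-2*n), (1:ℚ)/j with hB_def
  set C : ℚ := ∑ k ∈ Ioc 0 (p-2-2*n), (1:ℚ)/k with hC_def
  set E : ℚ := ∑ j ∈ Ioc (p-2-2*n) (p-1), (1:ℚ)/j with hE_def
  set H : ℚ := ∑ j ∈ Ioc 0 (p-1), (1:ℚ)/j with hH_def
  set G : ℚ := ∑ t ∈ Ioc 0 (2*n), (1:ℚ)/t with hG_def
  set G' : ℚ := ∑ t ∈ Ioc 0 (2*n+1), (1:ℚ)/t with hG'_def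
  have hIcc : ∀ k : ℕ, Finset.Icc 1 k = Finset.Ioc 0 k := fun k => by rw [← Finset.Icc_add_one_left_eq_Ioc, zero_add]
  -- splitting identity
  have hsplit : harmonicQ (2*(p-1)-2*n) - harmonicQ (p-1-2*n) = 1/(p:ℚ) + A + B := by
    unfold harmonicQ
    rw [hIcc, hIcc]
    have h1 := Finset.sum_Ioc_consecutive (fun j : ℕ => (1:ℚ)/j)
      (show 0 ≤ p-1-2*n by omega) (show p-1-2*n ≤ p-1 by omega)
    have h2 := Finset.sum_Ioc_consecutive (fun j : ℕ => (1:ℚ)/j)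
      (show (0:ℕ) ≤ p-1 by omega) (show p-1 ≤ p by omega)
    have h3 := Finset.sum_Ioc_consecutive (fun j : ℕ => (1:ℚ)/j)
      (show (0:ℕ) ≤ p by omega) (show p ≤ 2*(p-1)-2*n by omega)
    have h4 : Finset.Ioc (p-1) p = {p} := by
      ext x
      simp only [Finset.mem_Ioc, Finset.mem_singleton]
      omega
    rw [h4, Finset.sum_singleton] at h2
    rw [← hA_def] at h1
    rw [← hB_def] at h3
    linarith [h1, h2, h3]
  -- reindexings
  have hA : A = ∑ t ∈ Ioc 0 (2*n), (1:ℚ)/((p - t : ℕ)) := by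
    rw [hA_def]
    refine Finset.sum_nbij' (fun j => p - j) (fun t => p - t) ?_ ?_ ?_ ?_ ?_ <;>
      · intro a ha
        simp only [Finset.mem_Ioc] at *
        first
          | omega
          | (rw [show p - (p - a) = a by omega])
  have hB : B = ∑ k ∈ Ioc 0 (p-2-2*n), (1:ℚ)/((p + k : ℕ)) := by
    rw [hB_def]
    refine Finset.sum_nbij' (fun j => j - p) (fun k => p + k) ?_ ?_ ?_ ?_ ?_ <;>
      · intro a ha
        simp only [Finset.mem_Ioc] at *
        first
          | omega
          | (rw [show p + (a - p) = a by omega])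
  have hE : E = ∑ t ∈ Ioc 0 (2*n+1), (1:ℚ)/((p - t : ℕ)) := by
    rw [hE_def]
    refine Finset.sum_nbij' (fun j => p - j) (fun t => p - t) ?_ ?_ ?_ ?_ ?_ <;>
      · intro a ha
        simp only [Finset.mem_Ioc] at *
        first
          | omega
          | (rw [show p - (p - a) = a by omega])
  have hH : H = ∑ j ∈ Ioc 0 (p-1), (1:ℚ)/((p - j : ℕ)) := by
    rw [hH_def]
    refine Finset.sum_nbij' (fun j => p - j) (fun t => p - t) ?_ ?_ ?_ ?_ ?_ <;>
      · intro a ha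
        simp only [Finset.mem_Ioc] at *
        first
          | omega
          | (rw [show p - (p - a) = a by omega])
  -- termwise congruence helper
  have hterm_add : ∀ t : ℕ, 0 < t → t < p →
      ‖(((1:ℚ)/((p - t : ℕ)) + (1:ℚ)/t : ℚ) : ℚ_[p])‖ ≤ (p:ℝ)⁻¹ := by
    intro t ht0 htp
    have h1 : ((p - t : ℕ) : ℚ) = (p:ℚ) - t := by
      rw [Nat.cast_sub (by omega)]
    have hne1 : ((p - t : ℕ) : ℚ) ≠ 0 := by
      rw [h1]
      have : (t:ℚ) < p := by exact_mod_cast htp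
      intro h; linarith
    have hne2 : (t : ℚ) ≠ 0 := by
      exact_mod_cast Nat.pos_iff_ne_zero.mp ht0
    have heq : ((1:ℚ)/((p - t : ℕ)) + (1:ℚ)/t : ℚ)
        = (((p:ℤ) : ℚ) / (((p - t : ℕ) : ℚ) * ((t : ℕ) : ℚ))) := by
      field_simp
      rw [h1]
      push_cast
      ring
    rw [heq]
    exact my_core p (my_not_dvd p (by omega) (by omega)) (my_not_dvd p ht0 htp) dvd_rfl
  have hterm_sub : ∀ k : ℕ, 0 < k → k < p →
      ‖(((1:ℚ)/((p + k : ℕ)) - (1:ℚ)/k : ℚ) : ℚ_[p])‖ ≤ (p:ℝ)⁻¹ := by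
    intro k hk0 hkp
    have hne1 : ((p + k : ℕ) : ℚ) ≠ 0 := by
      have : 0 < p + k := by omega
      exact_mod_cast Nat.pos_iff_ne_zero.mp this
    have hne2 : (k : ℚ) ≠ 0 := by
      exact_mod_cast Nat.pos_iff_ne_zero.mp hk0
    have heq : ((1:ℚ)/((p + k : ℕ)) - (1:ℚ)/k : ℚ)
        = (((-(p:ℤ)) : ℚ) / (((p + k : ℕ) : ℚ) * ((k : ℕ) : ℚ))) := by
      field_simp
      try push_cast
      try ring
    rw [heq]
    refine my_core p ?_ (my_not_dvd p hk0 hkp) (dvd_neg.mpr dvd_rfl)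
    intro h
    exact my_not_dvd p hk0 hkp ((Nat.dvd_add_right (dvd_refl p)).mp h)
  -- key norm bounds
  have key1 : ‖((A + G : ℚ) : ℚ_[p])‖ ≤ (p:ℝ)⁻¹ := by
    rw [hA, hG_def, ← Finset.sum_add_distrib, Rat.cast_sum]
    refine my_sum_norm_le p _ _ hpin0 ?_
    intro t ht
    simp only [Finset.mem_Ioc] at ht
    exact hterm_add t (by omega) (by omega)
  have key2 : ‖((B - C : ℚ) : ℚ_[p])‖ ≤ (p:ℝ)⁻¹ := by
    rw [hB, hC_def, ← Finset.sum_sub_distrib, Rat.cast_sum]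
    refine my_sum_norm_le p _ _ hpin0 ?_
    intro k hk
    simp only [Finset.mem_Ioc] at hk
    exact hterm_sub k (by omega) (by omega)
  have key3 : ‖((E + G' : ℚ) : ℚ_[p])‖ ≤ (p:ℝ)⁻¹ := by
    rw [hE, hG'_def, ← Finset.sum_add_distrib, Rat.cast_sum]
    refine my_sum_norm_le p _ _ hpin0 ?_
    intro t ht
    simp only [Finset.mem_Ioc] at ht
    exact hterm_add t (by omega) (by omega)
  have keyH : ‖((H : ℚ) : ℚ_[p])‖ ≤ (p:ℝ)⁻¹ := by
    have h2H : (2:ℚ) * H = ∑ j ∈ Ioc 0 (p-1), ((1:ℚ)/((p - j : ℕ)) + (1:ℚ)/j) := by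
      rw [Finset.sum_add_distrib, ← hH, ← hH_def]
      ring
    have hb : ‖(((2:ℚ) * H : ℚ) : ℚ_[p])‖ ≤ (p:ℝ)⁻¹ := by
      rw [h2H, Rat.cast_sum]
      refine my_sum_norm_le p _ _ hpin0 ?_
      intro j hj
      simp only [Finset.mem_Ioc] at hj
      exact hterm_add j (by omega) (by omega)
    have h2n : ‖((2:ℚ) : ℚ_[p])‖ = 1 := by
      have := my_norm_nat_eq_one p (a := 2) (my_not_dvd p (by omega) (by omega))
      simpa using this
    rw [Rat.cast_mul, norm_mul, h2n, one_mul] at hb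
    exact hb
  -- exact identities
  have hHCE : H = C + E :=
    (Finset.sum_Ioc_consecutive (fun j : ℕ => (1:ℚ)/j)
      (show (0:ℕ) ≤ p-2-2*n by omega) (show p-2-2*n ≤ p-1 by omega)).symm
  have hG'G : G' = G + 1/(((2*n+1 : ℕ)) : ℚ) :=
    Finset.sum_Ioc_succ_top (Nat.zero_le _) _
  have hmain : (A + B) - 1/(((2*n+1 : ℕ)) : ℚ) = (A + G) + (B - C) + (H - (E + G')) := by
    rw [hHCE, hG'G]
    ring
  have hT : ‖(((A + B) - 1/(((2*n+1 : ℕ)) : ℚ) : ℚ) : ℚ_[p])‖ ≤ (p:ℝ)⁻¹ := by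
    rw [hmain]
    have c3 : ‖((H - (E + G') : ℚ) : ℚ_[p])‖ ≤ (p:ℝ)⁻¹ := by
      rw [Rat.cast_sub]
      refine le_trans (by
        rw [sub_eq_add_neg]
        exact Padic.nonarchimedean _ _) (max_le keyH ?_)
      rw [norm_neg]
      exact key3
    rw [Rat.cast_add, Rat.cast_add]
    exact le_trans (Padic.nonarchimedean _ _)
      (max_le (le_trans (Padic.nonarchimedean _ _) (max_le key1 key2)) c3)
  -- norm ≤ 1 of A + B
  have hAB1 : ‖((A + B : ℚ) : ℚ_[p])‖ ≤ 1 := by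
    rw [Rat.cast_add]
    refine le_trans (Padic.nonarchimedean _ _) (max_le ?_ ?_)
    · rw [hA_def, Rat.cast_sum]
      refine my_sum_norm_le p _ _ zero_le_one ?_
      intro j hj
      simp only [Finset.mem_Ioc] at hj
      exact my_norm_one_div p (my_not_dvd p (by omega) (by omega))
    · rw [hB_def, Rat.cast_sum]
      refine my_sum_norm_le p _ _ zero_le_one ?_
      intro j hj
      simp only [Finset.mem_Ioc] at hj
      refine my_norm_one_div p ?_
      intro hdvd
      have h2 : p ∣ (j - p) := Nat.dvd_sub hdvd dvd_rfl
      exact my_not_dvd p (a := j - p) (by omega) (by omega) h2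
  have hpQ : (p : ℚ) ≠ 0 := by exact_mod_cast Nat.pos_iff_ne_zero.mp hp0
  have hXeq : (p:ℚ) * (1/(p:ℚ) + A + B) = 1 + (p:ℚ) * (A + B) := by
    field_simp
    ring
  have hpin1 : (p:ℝ)⁻¹ ≤ 1 := by
    have h1 : (1:ℝ) ≤ p := by exact_mod_cast hp0
    exact inv_le_one_of_one_le₀ h1
  constructor
  · rw [hsplit, hXeq]
    rw [Rat.cast_add, Rat.cast_mul, Rat.cast_one]
    refine le_trans (Padic.nonarchimedean _ _) (max_le (by simp) ?_)
    rw [norm_mul]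
    have hnp : ‖(((p:ℕ):ℚ) : ℚ_[p])‖ = (p:ℝ)⁻¹ := by
      rw [Rat.cast_natCast]
      exact Padic.norm_p
    rw [hnp]
    calc (p:ℝ)⁻¹ * ‖((A + B : ℚ) : ℚ_[p])‖ ≤ (p:ℝ)⁻¹ * 1 := by
          exact mul_le_mul_of_nonneg_left hAB1 hpin0
      _ ≤ 1 := by rwa [mul_one]
  · unfold padicCongr
    rw [hsplit, hXeq]
    have hdiff : (1 + (p:ℚ) * (A + B)) - (1 + (p:ℚ)/(2*(n:ℚ)+1))
        = (p:ℚ) * ((A + B) - 1/(((2*n+1 : ℕ)) : ℚ)) := by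
      push_cast
      ring
    rw [hdiff, Rat.cast_mul, norm_mul]
    have hnp : ‖(((p:ℕ):ℚ) : ℚ_[p])‖ = (p:ℝ)⁻¹ := by
      rw [Rat.cast_natCast]
      exact Padic.norm_p
    rw [hnp]
    have hexp : (p:ℝ) ^ (-((2:ℕ) : ℤ)) = (p:ℝ)⁻¹ * (p:ℝ)⁻¹ := by
      rw [zpow_neg, ← mul_inv]
      congr 1
      rw [show ((2:ℕ) : ℤ) = 2 by norm_num]
      exact zpow_two _
    rw [hexp]
    exact mul_le_mul_of_nonneg_left hT hpin0
end
end

section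
/- Let p be a prime with p ≥ 5 and let k be an integer with 1 ≤ k ≤ p - 1. Then the multiple harmonic sum 𝒜★_k satisfies 𝒜★_k ≡ ((-1)^{k-1}/k)·H_k (mod p^2), where H_k := Σ_{a=1}^{p-1} 1/a^k. -/
open Finset

noncomputable section

namespace Statement19Aux

variable (p : ℕ) [hfp : Fact p.Prime]

/-- The evaluation point `a ↦ 1/a` in `ℚ_[p]`. -/
def xf (a : ℕ) : ℚ_[p] := (((1 : ℚ) / (a : ℚ) : ℚ) : ℚ_[p])

lemma norm_natCast_eq_one {a : ℕ} (h : ¬ p ∣ a) : ‖(a : ℚ_[p])‖ = 1 := by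
  have hle : ‖(a : ℚ_[p])‖ ≤ 1 := by
    simpa using Padic.norm_int_le_one (p := p) (a : ℤ)
  rcases lt_or_eq_of_le hle with hlt | heq
  · exfalso
    have h2 : ((p : ℤ)) ∣ (a : ℤ) := by
      rw [← Padic.norm_intCast_lt_one_iff]
      simpa using hlt
    exact h (Int.ofNat_dvd.mp h2)
  · exact heq

lemma not_dvd_of_Icc {a : ℕ} (ha : a ∈ Finset.Icc 1 (p - 1)) : ¬ p ∣ a := by
  have hp := hfp.out
  simp only [Finset.mem_Icc] at ha
  have : a < p := lt_of_le_of_lt ha.2 (Nat.sub_lt hp.pos one_pos)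
  intro hd
  exact absurd (Nat.le_of_dvd (by omega) hd) (by omega)

lemma xf_eq (a : ℕ) : xf p a = 1 / (a : ℚ_[p]) := by
  rw [xf]; push_cast; ring

lemma norm_xf_eq_one {a : ℕ} (ha : a ∈ Finset.Icc 1 (p - 1)) : ‖xf p a‖ = 1 := by
  rw [xf_eq, norm_div, norm_one, norm_natCast_eq_one p (not_dvd_of_Icc p ha)]
  norm_num

lemma mhs_cast (j : ℕ) :
    ((mhs p j : ℚ) : ℚ_[p]) = ∑ t ∈ (Finset.Icc 1 (p - 1)).powersetCard j,
      ∏ i ∈ t, xf p i := by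
  rw [mhs]
  push_cast
  simp only [xf_eq, one_div]

lemma hgen_cast (j : ℕ) :
    ((Hgen p j : ℚ) : ℚ_[p]) = ∑ a ∈ Finset.Icc 1 (p - 1), xf p a ^ j := by
  rw [Hgen]
  push_cast
  simp only [xf_eq, one_div, inv_pow]

/-- Newton's identities evaluated at `1/1, …, 1/(p-1)` in `ℚ_[p]`. -/
lemma newton_eval (k : ℕ) :
    (k : ℚ_[p]) * ((mhs p k : ℚ) : ℚ_[p]) =
      (-1) ^ (k + 1) * ∑ a ∈ (antidiagonal k).filter (fun a => a.1 < k),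
        (-1) ^ a.1 * ((mhs p a.1 : ℚ) : ℚ_[p]) * ((Hgen p a.2 : ℚ) : ℚ_[p]) := by
  classical
  set s : Finset ℕ := Finset.Icc 1 (p - 1) with hs
  set f : {x // x ∈ s} → ℚ_[p] := fun i => xf p (i : ℕ) with hf
  have key := congrArg (MvPolynomial.aeval f)
    (MvPolynomial.mul_esymm_eq_sum {x // x ∈ s} ℚ_[p] k)
  have hmap : Multiset.map f (univ.val : Multiset {x // x ∈ s}) =
      Multiset.map (xf p) s.val := by
    rw [Finset.univ_eq_attach, Finset.attach_val, hf]
    rw [show (fun i : {x // x ∈ s} => xf p (i : ℕ)) = (xf p) ∘ Subtype.val from rfl]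
    rw [← Multiset.map_map, Multiset.attach_map_val]
  have hesymm : ∀ j, (MvPolynomial.aeval f) (MvPolynomial.esymm {x // x ∈ s} ℚ_[p] j)
      = ((mhs p j : ℚ) : ℚ_[p]) := by
    intro j
    rw [MvPolynomial.aeval_esymm_eq_multiset_esymm, hmap, Finset.esymm_map_val, mhs_cast]
  have hpsum : ∀ j, (MvPolynomial.aeval f) (MvPolynomial.psum {x // x ∈ s} ℚ_[p] j)
      = ((Hgen p j : ℚ) : ℚ_[p]) := by
    intro j
    rw [MvPolynomial.psum, map_sum, hgen_cast]
    simp only [map_pow, MvPolynomial.aeval_X]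
    rw [Finset.univ_eq_attach]
    exact Finset.sum_attach s (fun a => xf p a ^ j)
  simpa only [map_mul, map_sum, map_pow, map_natCast, map_neg, map_one, hesymm, hpsum]
    using key

lemma mhs_norm_le_one (j : ℕ) : ‖((mhs p j : ℚ) : ℚ_[p])‖ ≤ 1 := by
  rw [mhs_cast]
  refine IsUltrametricDist.norm_sum_le_of_forall_le_of_nonneg zero_le_one fun t ht => ?_
  rw [norm_prod]
  refine Finset.prod_le_one (fun i _ => norm_nonneg _) fun i hi => ?_
  have hsub := (Finset.mem_powersetCard.mp ht).1
  rw [norm_xf_eq_one p (hsub hi)]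

lemma hgen_norm_le {j : ℕ} (hj1 : 1 ≤ j) (hj2 : j ≤ p - 2) :
    ‖((Hgen p j : ℚ) : ℚ_[p])‖ ≤ (p : ℝ) ^ (-1 : ℤ) := by
  have hp := hfp.out
  have hp2 : 2 ≤ p := hp.two_le
  set F : ℕ := (p - 1).factorial with hF
  set N : ℕ := ∑ a ∈ Finset.Icc 1 (p - 1), (F / a) ^ j with hN
  -- rationally, Hgen p j = N / F^j
  have hdvd : ∀ a ∈ Finset.Icc 1 (p - 1), a ∣ F := by
    intro a ha
    simp only [Finset.mem_Icc] at ha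
    exact Nat.dvd_factorial ha.1 ha.2
  have hcastdiv : ∀ a ∈ Finset.Icc 1 (p - 1),
      (((F / a : ℕ) : ℚ)) = (F : ℚ) / (a : ℚ) := by
    intro a ha
    exact_mod_cast Nat.cast_div (hdvd a ha) (by
      simp only [Finset.mem_Icc] at ha
      exact_mod_cast Nat.cast_ne_zero.mpr (by omega))
  have hNq : (N : ℚ) = (F : ℚ) ^ j * Hgen p j := by
    rw [hN, Hgen]
    push_cast
    rw [Finset.mul_sum]
    refine Finset.sum_congr rfl fun a ha => ?_
    rw [show (((F / a : ℕ) : ℚ)) = (F : ℚ) / (a : ℚ) from hcastdiv a ha]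
    rw [div_pow]
    ring
  have hFne : ¬ p ∣ F := by
    rw [hF, hp.dvd_factorial]
    omega
  have hFQne : (F : ℚ) ≠ 0 := by
    exact_mod_cast Nat.cast_ne_zero.mpr (Nat.factorial_ne_zero _)
  have hHeq : (Hgen p j : ℚ) = (N : ℚ) / (F : ℚ) ^ j := by
    rw [hNq]
    field_simp
  -- p ∣ N via ZMod p
  have hdvdN : p ∣ N := by
    rw [← ZMod.natCast_eq_zero_iff]
    rw [hN]
    push_cast
    have hkey : ∀ a ∈ Finset.Icc 1 (p - 1),
        (((F / a : ℕ) : ZMod p)) ^ j = ((F : ZMod p)) ^ j * (((a : ZMod p))⁻¹) ^ j := by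
      intro a ha
      have hane : ((a : ZMod p)) ≠ 0 := by
        rw [Ne, ZMod.natCast_eq_zero_iff]
        exact not_dvd_of_Icc p ha
      have hmul : (((F / a : ℕ) : ZMod p)) * (a : ZMod p) = (F : ZMod p) := by
        rw [← Nat.cast_mul, Nat.div_mul_cancel (hdvd a ha)]
      have : (((F / a : ℕ) : ZMod p)) = (F : ZMod p) * ((a : ZMod p))⁻¹ := by
        field_simp [hane]
        exact hmul
      rw [this, mul_pow]
    rw [Finset.sum_congr rfl hkey, ← Finset.mul_sum]
    have hsum0 : ∑ a ∈ Finset.Icc 1 (p - 1), (((a : ZMod p))⁻¹) ^ j = 0 := by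
      have h1 : ∑ a ∈ Finset.Icc 1 (p - 1), (((a : ZMod p))⁻¹) ^ j
          = ∑ x ∈ (univ : Finset (ZMod p)).erase 0, (x⁻¹) ^ j := by
        refine Finset.sum_nbij' (fun a => ((a : ZMod p)))
          (fun x => x.val) ?_ ?_ ?_ ?_ ?_
        · intro a ha
          refine Finset.mem_erase.mpr ⟨?_, Finset.mem_univ _⟩
          rw [Ne, ZMod.natCast_eq_zero_iff]
          exact not_dvd_of_Icc p ha
        · intro x hx
          have hxne := (Finset.mem_erase.mp hx).1
          have hvlt : x.val < p := ZMod.val_lt x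
          have hvpos : 0 < x.val :=
            Nat.pos_of_ne_zero (fun h => hxne ((ZMod.val_eq_zero x).mp h))
          show x.val ∈ Finset.Icc 1 (p - 1)
          exact Finset.mem_Icc.mpr ⟨hvpos, by omega⟩
        · intro a ha
          simp only [Finset.mem_Icc] at ha
          exact ZMod.val_cast_of_lt (by omega)
        · intro x hx
          exact ZMod.natCast_zmod_val x
        · intro a ha
          rfl
      rw [h1]
      have h2 : ∑ x ∈ (univ : Finset (ZMod p)).erase 0, (x⁻¹) ^ j
          = ∑ x : ZMod p, (x⁻¹) ^ j := by
        refine Finset.sum_erase _ ?_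
        rw [inv_zero, zero_pow (by omega)]
      rw [h2]
      have h3 : ∑ x : ZMod p, (x⁻¹) ^ j = ∑ x : ZMod p, x ^ j := by
        refine Finset.sum_nbij' (fun x => x⁻¹) (fun x => x⁻¹)
          (fun _ _ => Finset.mem_univ _) (fun _ _ => Finset.mem_univ _)
          (fun x _ => inv_inv x) (fun x _ => inv_inv x) (fun x _ => rfl)
      rw [h3]
      refine FiniteField.sum_pow_lt_card_sub_one (ZMod p) j ?_
      rw [ZMod.card]
      omega
    rw [hsum0, mul_zero]
  -- now the norm bound
  rw [hHeq]
  have : (((N : ℚ) / (F : ℚ) ^ j : ℚ) : ℚ_[p]) = (N : ℚ_[p]) / (F : ℚ_[p]) ^ j := by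
    push_cast; ring
  rw [this, norm_div, norm_pow, norm_natCast_eq_one p hFne, one_pow, div_one]
  have : ((N : ℚ_[p])) = (((N : ℤ)) : ℚ_[p]) := by push_cast; rfl
  rw [this]
  have hgoal := (Padic.norm_int_le_pow_iff_dvd (p := p) (N : ℤ) 1).mpr
    (by rw [pow_one]; exact_mod_cast hdvdN)
  simpa using hgoal

lemma mhs_norm_le {j : ℕ} (hj1 : 1 ≤ j) (hj2 : j ≤ p - 2) :
    ‖((mhs p j : ℚ) : ℚ_[p])‖ ≤ (p : ℝ) ^ (-1 : ℤ) := by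
  have hp := hfp.out
  have hjp : ¬ p ∣ j := by
    intro hd
    have := Nat.le_of_dvd (by omega) hd
    omega
  have hnj : ‖(j : ℚ_[p])‖ = 1 := norm_natCast_eq_one p hjp
  have hne := newton_eval p j
  have hb : ‖(j : ℚ_[p]) * ((mhs p j : ℚ) : ℚ_[p])‖ ≤ (p : ℝ) ^ (-1 : ℤ) := by
    rw [hne, norm_mul, norm_pow, norm_neg, norm_one, one_pow, one_mul]
    refine IsUltrametricDist.norm_sum_le_of_forall_le_of_nonneg
      (by positivity) fun a ha => ?_
    simp only [Finset.mem_filter, Finset.HasAntidiagonal.mem_antidiagonal] at ha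
    have ha2 : 1 ≤ a.2 ∧ a.2 ≤ p - 2 := by omega
    rw [norm_mul, norm_mul, norm_pow, norm_neg, norm_one, one_pow, one_mul]
    calc ‖((mhs p a.1 : ℚ) : ℚ_[p])‖ * ‖((Hgen p a.2 : ℚ) : ℚ_[p])‖
        ≤ 1 * ((p : ℝ) ^ (-1 : ℤ)) := by
          refine mul_le_mul (mhs_norm_le_one p a.1)
            (hgen_norm_le p ha2.1 ha2.2) (norm_nonneg _) zero_le_one
      _ = (p : ℝ) ^ (-1 : ℤ) := one_mul _
  rwa [norm_mul, hnj, one_mul] at hb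

end Statement19Aux

open Statement19Aux in
theorem statement19 (p k : ℕ) [Fact p.Prime] (hp : 5 ≤ p) (hk1 : 1 ≤ k) (hk : k ≤ p - 1) :
    padicCongr p 2 (mhs p k) ((-1) ^ (k - 1) / (k : ℚ) * Hgen p k) := by
  have hpp := (Fact.out : p.Prime)
  rw [padicCongr]
  have hkp : ¬ p ∣ k := by
    intro hd
    have := Nat.le_of_dvd (by omega) hd
    omega
  have hnk : ‖(k : ℚ_[p])‖ = 1 := norm_natCast_eq_one p hkp
  have hk0 : (k : ℚ_[p]) ≠ 0 := by
    intro h; rw [h, norm_zero] at hnk; norm_num at hnk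
  have hcast : (((mhs p k - (-1) ^ (k - 1) / (k : ℚ) * Hgen p k : ℚ)) : ℚ_[p])
      = ((mhs p k : ℚ) : ℚ_[p])
        - (-1) ^ (k - 1) / (k : ℚ_[p]) * ((Hgen p k : ℚ) : ℚ_[p]) := by
    push_cast
    ring
  rw [hcast]
  have hfactor : ((mhs p k : ℚ) : ℚ_[p])
        - (-1) ^ (k - 1) / (k : ℚ_[p]) * ((Hgen p k : ℚ) : ℚ_[p])
      = ((k : ℚ_[p]))⁻¹ * ((k : ℚ_[p]) * ((mhs p k : ℚ) : ℚ_[p])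
        - (-1) ^ (k - 1) * ((Hgen p k : ℚ) : ℚ_[p])) := by
    field_simp
  rw [hfactor, norm_mul, norm_inv, hnk, inv_one, one_mul]
  -- use Newton's identity
  have hne := newton_eval p k
  have hmem : ((0 : ℕ), k) ∈ (antidiagonal k).filter (fun a => a.1 < k) := by
    simp only [Finset.mem_filter, Finset.HasAntidiagonal.mem_antidiagonal]
    omega
  have hsplit : ∑ a ∈ (antidiagonal k).filter (fun a => a.1 < k),
        (-1) ^ a.1 * ((mhs p a.1 : ℚ) : ℚ_[p]) * ((Hgen p a.2 : ℚ) : ℚ_[p])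
      = ((Hgen p k : ℚ) : ℚ_[p])
        + ∑ a ∈ ((antidiagonal k).filter (fun a => a.1 < k)).erase (0, k),
          (-1) ^ a.1 * ((mhs p a.1 : ℚ) : ℚ_[p]) * ((Hgen p a.2 : ℚ) : ℚ_[p]) := by
    rw [← Finset.add_sum_erase _ _ hmem]
    congr 1
    have hmhs0 : (mhs p 0 : ℚ) = 1 := by
      simp [mhs]
    simp [hmhs0]
  have hsgn : ((-1 : ℚ_[p])) ^ (k + 1) = (-1) ^ (k - 1) := by
    have h1 : k + 1 = (k - 1) + 2 := by omega
    rw [h1, pow_add]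
    norm_num
  have hkey : (k : ℚ_[p]) * ((mhs p k : ℚ) : ℚ_[p])
        - (-1) ^ (k - 1) * ((Hgen p k : ℚ) : ℚ_[p])
      = (-1) ^ (k - 1) * ∑ a ∈ ((antidiagonal k).filter (fun a => a.1 < k)).erase (0, k),
          (-1) ^ a.1 * ((mhs p a.1 : ℚ) : ℚ_[p]) * ((Hgen p a.2 : ℚ) : ℚ_[p]) := by
    rw [hne, hsplit, hsgn]
    ring
  rw [hkey, norm_mul, norm_pow, norm_neg, norm_one, one_pow, one_mul]
  -- bound the remainder sum
  have hppos : (0 : ℝ) < (p : ℝ) := by exact_mod_cast hpp.pos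
  have h2 : (p : ℝ) ^ (-(2 : ℕ) : ℤ) = ((p : ℝ) ^ (-1 : ℤ)) * ((p : ℝ) ^ (-1 : ℤ)) := by
    rw [← zpow_add₀ (ne_of_gt hppos)]
    norm_num
  refine IsUltrametricDist.norm_sum_le_of_forall_le_of_nonneg (by positivity) fun a ha => ?_
  have hamem := Finset.mem_erase.mp ha
  have haS := hamem.2
  simp only [Finset.mem_filter, Finset.HasAntidiagonal.mem_antidiagonal] at haS
  have ha1 : 1 ≤ a.1 := by
    by_contra hcon
    apply hamem.1
    have h1 : a.1 = 0 := by omega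
    have h2 : a.2 = k := by omega
    exact Prod.ext h1 h2
  have hb1 : a.1 ≤ p - 2 := by omega
  have ha2 : 1 ≤ a.2 := by omega
  have hb2 : a.2 ≤ p - 2 := by omega
  rw [norm_mul, norm_mul, norm_pow, norm_neg, norm_one, one_pow, one_mul, h2]
  exact mul_le_mul (mhs_norm_le p ha1 hb1) (hgen_norm_le p ha2 hb2)
    (norm_nonneg _) (by positivity)
end
end
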